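/- The Nessyahu–Tadmor scheme with van Albada limiter is TVD: under the CFL condition λ·max_u|a(u)| ≤ (−1 + √(3/2 + 3√2/4))/(1+√2), the staggered update ū^{n+1}_{j+1/2} = (ū^n_j + ū^n_{j+1})/2 + (u'_j − u'_{j+1})/8 − λ[f(u^{n+1/2}_{j+1}) − f(u^{n+1/2}_j)] with u^{n+1/2}_j = ū^n_j − (λ/2)a(ū^n_j)u'_j and u'_j = ψ_vA(Δū^n_{j−1/2}, Δū^n_{j+1/2}) satisfies Σ_j|ū^{n+1}_{j+1/2} − ū^{n+1}_{j−1/2}| ≤ Σ_j|Δū^n_{j+1/2}|. -/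

import Mathlib

noncomputable def vanAlbada (a b : ℝ) : ℝ := (a ^ 2 * b + a * b ^ 2) / (a ^ 2 + b ^ 2)

lemma vanAlbada_comm (a b : ℝ) : vanAlbada a b = vanAlbada b a := by
  unfold vanAlbada
  rw [add_comm (a ^ 2) (b ^ 2)]
  ring_nf

lemma vanAlbada_near_half (a b : ℝ) :
    |vanAlbada a b - b / 2| ≤ Real.sqrt 2 / 2 * |b| := by
  rcases eq_or_ne b 0 with rb | rb
  · simp [vanAlbada, rb]
  · have hpos : 0 < a ^ 2 + b ^ 2 := by positivity
    have key : vanAlbada a b - b / 2 = b * (a ^ 2 + 2 * a * b - b ^ 2) / (2 * (a ^ 2 + b ^ 2)) := by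
      unfold vanAlbada
      field_simp
      ring
    have h2 : Real.sqrt 2 ^ 2 = 2 := Real.sq_sqrt (by norm_num)
    have hs0 : (0:ℝ) ≤ Real.sqrt 2 := Real.sqrt_nonneg 2
    have hsq : (a ^ 2 + 2 * a * b - b ^ 2) ^ 2 ≤ (Real.sqrt 2 * (a ^ 2 + b ^ 2)) ^ 2 := by
      nlinarith [sq_nonneg (a ^ 2 - 2 * a * b - b ^ 2)]
    have main : |a ^ 2 + 2 * a * b - b ^ 2| ≤ Real.sqrt 2 * (a ^ 2 + b ^ 2) := by
      calc |a ^ 2 + 2 * a * b - b ^ 2| = Real.sqrt ((a ^ 2 + 2 * a * b - b ^ 2) ^ 2) :=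
            (Real.sqrt_sq_eq_abs _).symm
        _ ≤ Real.sqrt ((Real.sqrt 2 * (a ^ 2 + b ^ 2)) ^ 2) := Real.sqrt_le_sqrt hsq
        _ = Real.sqrt 2 * (a ^ 2 + b ^ 2) := Real.sqrt_sq (by positivity)
    rw [key, abs_div, abs_mul, abs_of_pos (show (0:ℝ) < 2 * (a ^ 2 + b ^ 2) by linarith),
      div_le_iff₀ (by linarith)]
    nlinarith [mul_le_mul_of_nonneg_left main (abs_nonneg b), abs_nonneg b]

lemma vanAlbada_abs_le (a b : ℝ) :
    |vanAlbada a b| ≤ (1 + Real.sqrt 2) / 2 * |b| := by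
  have h := vanAlbada_near_half a b
  have h2 : |vanAlbada a b| ≤ |vanAlbada a b - b / 2| + |b / 2| := by
    calc |vanAlbada a b| = |(vanAlbada a b - b / 2) + b / 2| := by ring_nf
      _ ≤ _ := abs_add_le _ _
  have h3 : |b / 2| = |b| / 2 := by rw [abs_div]; norm_num
  linarith

lemma cfl_quad (eps : ℝ) (h0 : 0 ≤ eps)
    (h : eps ≤ (-1 + Real.sqrt (3 / 2 + 3 * Real.sqrt 2 / 4)) / (1 + Real.sqrt 2)) :
    eps * (1 + (1 + Real.sqrt 2) / 2 * eps) ≤ (4 - Real.sqrt 2) / 8 := by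
  set s := Real.sqrt 2 with hsdef
  set r := Real.sqrt (3 / 2 + 3 * s / 4) with hrdef
  have hs0 : 0 ≤ s := Real.sqrt_nonneg 2
  have hs2 : s ^ 2 = 2 := Real.sq_sqrt (by norm_num)
  have hs1 : 1 ≤ s := by nlinarith
  have hr0 : 0 ≤ r := Real.sqrt_nonneg _
  have hr2 : r ^ 2 = 3 / 2 + 3 * s / 4 := Real.sq_sqrt (by linarith)
  have hr1 : 1 ≤ r := by nlinarith
  have ht : eps * (1 + s) ≤ -1 + r := (le_div_iff₀ (by linarith : (0:ℝ) < 1 + s)).mp h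
  have ht0 : 0 ≤ eps * (1 + s) := by positivity
  have hsq : (eps * (1 + s)) ^ 2 ≤ (-1 + r) ^ 2 := by nlinarith
  nlinarith [mul_le_mul_of_nonneg_left ht (by linarith : (0:ℝ) ≤ 1 + s), sq_nonneg (1 + s)]

lemma lip_of_deriv (f : ℝ → ℝ) (hf : ContDiff ℝ 1 f) (M : ℝ)
    (hM : ∀ x : ℝ, |deriv f x| ≤ M) (x y : ℝ) : |f x - f y| ≤ M * |x - y| := by
  have hd : Differentiable ℝ f := hf.differentiable one_ne_zero
  have := Convex.norm_image_sub_le_of_norm_deriv_le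
    (fun z (_ : z ∈ (Set.univ : Set ℝ)) => hd.differentiableAt)
    (fun z _ => by simpa [Real.norm_eq_abs] using hM z)
    convex_univ (Set.mem_univ y) (Set.mem_univ x)
  simpa [Real.norm_eq_abs] using this

/-- TVD stability of the Nessyahu–Tadmor scheme with the van Albada limiter,
under the CFL condition `λ·max|f'| ≤ (−1 + √(3/2 + 3√2/4))/(1+√2)`.
Here `v j` stands for the staggered value `ū^{n+1}_{j+1/2}`. -/
theorem NT_vanAlbada_TVD (f : ℝ → ℝ) (hf : ContDiff ℝ 1 f) (M : ℝ)
    (hM : ∀ x : ℝ, |deriv f x| ≤ M)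
    (lam : ℝ) (hlam : 0 < lam)
    (hCFL : lam * M ≤
      (-1 + Real.sqrt (3 / 2 + 3 * Real.sqrt 2 / 4)) / (1 + Real.sqrt 2))
    (u u' um v : ℤ → ℝ)
    (hTV : Summable fun j : ℤ => |u (j + 1) - u j|)
    (hu' : ∀ j : ℤ, u' j = vanAlbada (u j - u (j - 1)) (u (j + 1) - u j))
    (hum : ∀ j : ℤ, um j = u j - lam / 2 * (deriv f (u j) * u' j))
    (hv : ∀ j : ℤ, v j = (u j + u (j + 1)) / 2 + (u' j - u' (j + 1)) / 8
      - lam * (f (um (j + 1)) - f (um j))) :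
    ∑' j : ℤ, |v j - v (j - 1)| ≤ ∑' j : ℤ, |u (j + 1) - u j| := by
  classical
  have hM0 : 0 ≤ M := le_trans (abs_nonneg _) (hM 0)
  have hs0 : (0:ℝ) ≤ Real.sqrt 2 := Real.sqrt_nonneg 2
  obtain ⟨K, hK⟩ : ∃ K : ℝ, K = (1 + Real.sqrt 2) / 2 := ⟨_, rfl⟩
  have hK0 : 0 ≤ K := by rw [hK]; positivity
  obtain ⟨L, hL⟩ : ∃ L : ℤ → ℝ, ∀ j, L j = u j / 2 + u' j / 8 + lam * f (um j) :=
    ⟨_, fun _ => rfl⟩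
  obtain ⟨R, hR⟩ : ∃ R : ℤ → ℝ, ∀ j, R j = u j / 2 - u' j / 8 - lam * f (um j) :=
    ⟨_, fun _ => rfl⟩
  obtain ⟨D, hD⟩ : ∃ D : ℤ → ℝ, ∀ j, D j = u (j + 1) - u j := ⟨_, fun _ => rfl⟩
  have key : ∀ j : ℤ, |L (j + 1) - L j| + |R (j + 1) - R j| ≤ |D j| := by
    intro j
    have hu'j : u' j = vanAlbada (u j - u (j - 1)) (D j) := by rw [hD]; exact hu' j
    have hu'j1 : u' (j + 1) = vanAlbada (D j) (u (j + 1 + 1) - u (j + 1)) := by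
      have h := hu' (j + 1)
      have e : j + 1 - 1 = j := by ring
      rw [e, ← hD j] at h
      exact h
    have hb1 : |u' j - D j / 2| ≤ Real.sqrt 2 / 2 * |D j| := by
      rw [hu'j]; exact vanAlbada_near_half _ _
    have hb2 : |u' (j + 1) - D j / 2| ≤ Real.sqrt 2 / 2 * |D j| := by
      rw [hu'j1, vanAlbada_comm]; exact vanAlbada_near_half _ _
    have hK1 : |u' j| ≤ K * |D j| := by
      rw [hu'j, hK]; exact vanAlbada_abs_le _ _
    have hK2 : |u' (j + 1)| ≤ K * |D j| := by
      rw [hu'j1, vanAlbada_comm, hK]; exact vanAlbada_abs_le _ _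
    have hdiff : |u' (j + 1) - u' j| ≤ Real.sqrt 2 * |D j| := by
      have h := (abs_sub (u' (j + 1) - D j / 2) (u' j - D j / 2))
      have e : (u' (j + 1) - D j / 2) - (u' j - D j / 2) = u' (j + 1) - u' j := by ring
      rw [e] at h
      linarith
    have hum_diff : |um (j + 1) - um j| ≤ (1 + lam * M * K) * |D j| := by
      have e : um (j + 1) - um j
          = D j - lam / 2 * (deriv f (u (j + 1)) * u' (j + 1) - deriv f (u j) * u' j) := by
        rw [hum (j + 1), hum j, hD j]; ring
      have t1 : |deriv f (u (j + 1)) * u' (j + 1)| ≤ M * (K * |D j|) := by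
        rw [abs_mul]; exact mul_le_mul (hM _) hK2 (abs_nonneg _) hM0
      have t2 : |deriv f (u j) * u' j| ≤ M * (K * |D j|) := by
        rw [abs_mul]; exact mul_le_mul (hM _) hK1 (abs_nonneg _) hM0
      have t3 : |deriv f (u (j + 1)) * u' (j + 1) - deriv f (u j) * u' j|
          ≤ 2 * (M * (K * |D j|)) := (abs_sub _ _).trans (by linarith)
      calc |um (j + 1) - um j|
          ≤ |D j| + |lam / 2 * (deriv f (u (j + 1)) * u' (j + 1) - deriv f (u j) * u' j)| := by
            rw [e]; exact abs_sub _ _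
        _ = |D j| + lam / 2 * |deriv f (u (j + 1)) * u' (j + 1) - deriv f (u j) * u' j| := by
            rw [abs_mul, abs_of_pos (by linarith : (0:ℝ) < lam / 2)]
        _ ≤ (1 + lam * M * K) * |D j| := by nlinarith
    have hf_lip : |f (um (j + 1)) - f (um j)| ≤ M * |um (j + 1) - um j| :=
      lip_of_deriv f hf M hM _ _
    have hcfl : lam * M * (1 + K * (lam * M)) ≤ (4 - Real.sqrt 2) / 8 := by
      have h := cfl_quad (lam * M) (by positivity) hCFL
      rw [hK]
      nlinarith
    obtain ⟨X, hX⟩ : ∃ X : ℝ,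
        X = (u' (j + 1) - u' j) / 8 + lam * (f (um (j + 1)) - f (um j)) := ⟨_, rfl⟩
    have hXb : |X| ≤ |D j| / 2 := by
      have h1 : |X| ≤ |u' (j + 1) - u' j| / 8 + lam * |f (um (j + 1)) - f (um j)| := by
        calc |X| ≤ |(u' (j + 1) - u' j) / 8| + |lam * (f (um (j + 1)) - f (um j))| := by
              rw [hX]; exact abs_add_le _ _
          _ = |u' (j + 1) - u' j| / 8 + lam * |f (um (j + 1)) - f (um j)| := by
              rw [abs_div, abs_mul, abs_of_pos hlam, abs_of_pos (by norm_num : (0:ℝ) < 8)]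
      have h2 : lam * |f (um (j + 1)) - f (um j)| ≤ lam * (M * ((1 + lam * M * K) * |D j|)) := by
        apply mul_le_mul_of_nonneg_left _ hlam.le
        exact hf_lip.trans (mul_le_mul_of_nonneg_left hum_diff hM0)
      have h3 : lam * M * (1 + K * (lam * M)) * |D j| ≤ (4 - Real.sqrt 2) / 8 * |D j| :=
        mul_le_mul_of_nonneg_right hcfl (abs_nonneg _)
      nlinarith [abs_nonneg (D j)]
    have e1 : L (j + 1) - L j = D j / 2 + X := by
      rw [hL (j + 1), hL j, hX, hD j]; ring
    have e2 : R (j + 1) - R j = D j / 2 - X := by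
      rw [hR (j + 1), hR j, hX, hD j]; ring
    rw [e1, e2]
    obtain ⟨hx1, hx2⟩ := abs_le.mp hXb
    rcases abs_cases (D j / 2 + X) with ⟨p1, _⟩ | ⟨p1, _⟩ <;>
      rcases abs_cases (D j / 2 - X) with ⟨p2, _⟩ | ⟨p2, _⟩ <;>
      rcases abs_cases (D j) with ⟨p3, _⟩ | ⟨p3, _⟩ <;> linarith
  have hvLR : ∀ j : ℤ, v j - v (j - 1) = (L j - L (j - 1)) + (R (j + 1) - R j) := by
    intro j
    have hvj : v j = L j + R (j + 1) := by
      rw [hv j, hL j, hR (j + 1)]; ring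
    have hvj1 : v (j - 1) = L (j - 1) + R j := by
      rw [hv (j - 1)]
      have e : j - 1 + 1 = j := by ring
      rw [e, hL (j - 1), hR j]; ring
    rw [hvj, hvj1]; ring
  have hsumD : Summable (fun j : ℤ => |D j|) := by
    apply hTV.congr
    intro j
    rw [hD j]
  have hsumLR : Summable (fun j : ℤ => |L (j + 1) - L j| + |R (j + 1) - R j|) :=
    Summable.of_nonneg_of_le (fun j => by positivity) key hsumD
  have hsumL : Summable (fun j : ℤ => |L (j + 1) - L j|) :=
    Summable.of_nonneg_of_le (fun j => abs_nonneg _)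
      (fun j => le_add_of_nonneg_right (abs_nonneg _)) hsumLR
  have hsumR : Summable (fun j : ℤ => |R (j + 1) - R j|) :=
    Summable.of_nonneg_of_le (fun j => abs_nonneg _)
      (fun j => le_add_of_nonneg_left (abs_nonneg _)) hsumLR
  have hsumL' : Summable (fun j : ℤ => |L j - L (j - 1)|) := by
    refine (((Equiv.subRight (1:ℤ)).summable_iff
      (f := fun k : ℤ => |L (k + 1) - L k|)).mpr hsumL).congr ?_
    intro j
    simp only [Function.comp_apply, Equiv.subRight_apply]
    rw [show j - 1 + 1 = j from by ring]
  have hreindex : ∑' j : ℤ, |L j - L (j - 1)| = ∑' j : ℤ, |L (j + 1) - L j| := by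
    have h := (Equiv.subRight (1:ℤ)).tsum_eq (fun k : ℤ => |L (k + 1) - L k|)
    simp only [Equiv.subRight_apply] at h
    rw [← h]
    exact tsum_congr fun j => by rw [show j - 1 + 1 = j from by ring]
  have hsum_v : Summable (fun j : ℤ => |v j - v (j - 1)|) :=
    Summable.of_nonneg_of_le (fun j => abs_nonneg _)
      (fun j => by rw [hvLR j]; exact abs_add_le _ _)
      (hsumL'.add hsumR)
  calc ∑' j : ℤ, |v j - v (j - 1)|
      ≤ ∑' j : ℤ, (|L j - L (j - 1)| + |R (j + 1) - R j|) :=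
        Summable.tsum_le_tsum (fun j => by rw [hvLR j]; exact abs_add_le _ _) hsum_v (hsumL'.add hsumR)
    _ = (∑' j : ℤ, |L j - L (j - 1)|) + ∑' j : ℤ, |R (j + 1) - R j| := Summable.tsum_add hsumL' hsumR
    _ = (∑' j : ℤ, |L (j + 1) - L j|) + ∑' j : ℤ, |R (j + 1) - R j| := by rw [hreindex]
    _ = ∑' j : ℤ, (|L (j + 1) - L j| + |R (j + 1) - R j|) := (Summable.tsum_add hsumL hsumR).symm
    _ ≤ ∑' j : ℤ, |D j| := Summable.tsum_le_tsum key hsumLR hsumD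
    _ = ∑' j : ℤ, |u (j + 1) - u j| := tsum_congr fun j => by rw [hD j]
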